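/- Let A₁,…,A_m be pairwise commuting real n×n matrices with Bⱼ = Aⱼᵀ, and suppose ν¹,…,ν^{m+1} are common real eigenvectors: Bⱼνᵏ = λₖʲνᵏ for all j,k. Let h₁,…,h_{m+1} be real numbers, not all zero, satisfying ∑_{k=1}^{m+1} λₖʲ hₖ = 0 for each j = 1,…,m. Then F(x) = ∏_{k=1}^{m+1} |νᵏ·x|^{hₖ} is an autonomous first integral of the Lappo-Danilevskii system dx/dt = (∑ⱼ αⱼ(t)Aⱼ)x on any open set where all νᵏ·x ≠ 0; equivalently, F satisfies (∇F(x))·(Aⱼx) = 0 for every j = 1,…,m. -/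

import Mathlib

open Matrix

noncomputable def dotCLM {n : ℕ} (v : Fin n → ℝ) : (Fin n → ℝ) →L[ℝ] ℝ :=
  LinearMap.toContinuousLinearMap
    { toFun := fun y => v ⬝ᵥ y
      map_add' := fun a b => dotProduct_add v a b
      map_smul' := fun c a => by simp [dotProduct_smul, smul_eq_mul] }

@[simp] lemma dotCLM_apply {n : ℕ} (v y : Fin n → ℝ) : dotCLM v y = v ⬝ᵥ y := rfl

/-- Theorem 2.8: for pairwise commuting matrices `A₁,…,A_m` with common real
eigenvectors `ν¹,…,ν^{m+1}` of the transposes (`Aⱼᵀνᵏ = λₖʲνᵏ`) and reals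
`h₁,…,h_{m+1}`, not all zero, with `∑ₖ λₖʲhₖ = 0` for each `j`, the function
`F(x) = ∏ₖ |νᵏ·x|^{hₖ}` is an autonomous first integral of the Lappo-Danilevskii
system: it is annihilated by every derivation `𝔞ⱼF(x) = (∇F(x))·(Aⱼx)`. -/
theorem autonomous_first_integral_lappo_danilevskii
    (m n : ℕ) (Amat : Fin m → Matrix (Fin n) (Fin n) ℝ)
    (hcomm : ∀ j k, Amat j * Amat k = Amat k * Amat j)
    (ν : Fin (m + 1) → Fin n → ℝ) (hν : ∀ k, ν k ≠ 0)
    (lam : Fin (m + 1) → Fin m → ℝ)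
    (heig : ∀ k j, (Amat j)ᵀ.mulVec (ν k) = lam k j • ν k)
    (h : Fin (m + 1) → ℝ) (hh : h ≠ 0)
    (hsol : ∀ j, ∑ k, lam k j * h k = 0) :
    ∀ x : Fin n → ℝ, (∀ k, ν k ⬝ᵥ x ≠ 0) → ∀ j,
      fderiv ℝ (fun y => ∏ k, |ν k ⬝ᵥ y| ^ h k) x ((Amat j).mulVec x) = 0 := by
  intro x hx j
  classical
  set g : (Fin n → ℝ) → ℝ := fun y => ∑ k, h k * Real.log (ν k ⬝ᵥ y) with hgdef
  set G : (Fin n → ℝ) → ℝ := fun y => Real.exp (g y) with hGdef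
  have hcont : ∀ k : Fin (m+1), Continuous fun y : Fin n → ℝ => ν k ⬝ᵥ y :=
    fun k => continuous_finset_sum _ fun i _ => continuous_const.mul (continuous_apply i)
  have hev : ∀ᶠ y in nhds x, ∀ k, ν k ⬝ᵥ y ≠ 0 := by
    rw [Filter.eventually_all]
    exact fun k => (hcont k).continuousAt.eventually_ne (hx k)
  have hFG : (fun y => ∏ k, |ν k ⬝ᵥ y| ^ h k) =ᶠ[nhds x] G := by
    filter_upwards [hev] with y hy
    simp only [hGdef, hgdef]
    rw [Real.exp_sum]
    refine Finset.prod_congr rfl fun k _ => ?_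
    rw [Real.rpow_def_of_pos (abs_pos.mpr (hy k)), Real.log_abs, mul_comm]
  have hg : HasFDerivAt g (∑ k, (h k * (ν k ⬝ᵥ x)⁻¹) • dotCLM (ν k)) x := by
    apply HasFDerivAt.fun_sum
    intro k _
    have h1 : HasFDerivAt (fun y : Fin n → ℝ => ν k ⬝ᵥ y) (dotCLM (ν k)) x :=
      (dotCLM (ν k)).hasFDerivAt
    have h2 : HasDerivAt Real.log (ν k ⬝ᵥ x)⁻¹ (ν k ⬝ᵥ x) := Real.hasDerivAt_log (hx k)
    have h3 := h2.comp_hasFDerivAt x h1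
    have h4 := h3.const_mul (h k)
    convert h4 using 1
    · rfl
    · rfl
    rw [smul_smul]
  have hG : HasFDerivAt G
      (Real.exp (g x) • ∑ k, (h k * (ν k ⬝ᵥ x)⁻¹) • dotCLM (ν k)) x :=
    (Real.hasDerivAt_exp (g x)).comp_hasFDerivAt x hg
  rw [hFG.fderiv_eq, hG.fderiv]
  have key : ∀ k : Fin (m+1), ν k ⬝ᵥ (Amat j).mulVec x = lam k j * (ν k ⬝ᵥ x) := by
    intro k
    rw [dotProduct_mulVec, ← mulVec_transpose, heig k j, smul_dotProduct, smul_eq_mul]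
  simp only [ContinuousLinearMap.smul_apply, ContinuousLinearMap.sum_apply,
    ContinuousLinearMap.smul_apply, dotCLM_apply, smul_eq_mul]
  have : ∑ k, h k * (ν k ⬝ᵥ x)⁻¹ * (ν k ⬝ᵥ (Amat j).mulVec x) = 0 := by
    have : ∀ k : Fin (m+1), h k * (ν k ⬝ᵥ x)⁻¹ * (ν k ⬝ᵥ (Amat j).mulVec x)
        = lam k j * h k := by
      intro k
      rw [key k, show h k * (ν k ⬝ᵥ x)⁻¹ * (lam k j * (ν k ⬝ᵥ x))
        = lam k j * h k * ((ν k ⬝ᵥ x) * (ν k ⬝ᵥ x)⁻¹) by ring,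
        mul_inv_cancel₀ (hx k), mul_one]
    rw [Finset.sum_congr rfl fun k _ => this k, hsol j]
  rw [this, mul_zero]
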